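/- The sum over all rooted binary trees T with r vertices of the product over vertices v of 1/h_T(v) equals 1, where h_T(v) is the size of the subtree rooted at v. -/

import Mathlib

/-- Rooted binary trees: each vertex has an ordered pair of (possibly empty)
subtrees. `leaf` denotes the empty tree, so vertices are the `node`s. -/
inductive BinTree : Type
  | leaf : BinTree
  | node (l r : BinTree) : BinTree
deriving DecidableEq

/-- The number of vertices of a binary tree. -/
def BinTree.size : BinTree → ℕ
  | .leaf => 0
  | .node l r => l.size + r.size + 1

/-- The product `∏_v h_T(v)` of the hook (subtree) sizes over all vertices `v`. -/
def BinTree.hookProd : BinTree → ℕ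
  | .leaf => 1
  | .node l r => (l.size + r.size + 1) * l.hookProd * r.hookProd

def treesOf : ℕ → Finset BinTree
  | 0 => {BinTree.leaf}
  | n+1 => (Finset.range (n+1)).attach.biUnion fun i =>
      ((treesOf i.1) ×ˢ (treesOf (n - i.1))).image fun p => BinTree.node p.1 p.2
  decreasing_by
  · exact Finset.mem_range.mp i.2
  · have := Finset.mem_range.mp i.2; omega

lemma mem_treesOf : ∀ (T : BinTree) (n : ℕ), T ∈ treesOf n ↔ T.size = n := by
  intro T
  induction T with
  | leaf =>
    intro n
    cases n with
    | zero => simp [treesOf, BinTree.size]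
    | succ m => simp [treesOf, BinTree.size]
  | node l r ihl ihr =>
    intro n
    cases n with
    | zero => simp [treesOf, BinTree.size]
    | succ m =>
      simp only [treesOf, Finset.mem_biUnion, Finset.mem_attach, Finset.mem_image,
        Finset.mem_product, true_and, Subtype.exists, Finset.mem_range]
      constructor
      · rintro ⟨i, hi, ⟨p, ⟨hp1, hp2⟩, heq⟩⟩
        cases heq
        have h1 := (ihl i).mp hp1
        have h2 := (ihr (m - i)).mp hp2
        simp [BinTree.size]; omega
      · intro hsize
        simp [BinTree.size] at hsize
        refine ⟨l.size, by omega, ⟨(l, r), ⟨?_, ?_⟩, rfl⟩⟩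
        · exact (ihl l.size).mpr rfl
        · exact (ihr _).mpr (by omega)

lemma sum_treesOf : ∀ n : ℕ, ∑ T ∈ treesOf n, (1 : ℚ) / T.hookProd = 1 := by
  intro n
  induction n using Nat.strong_induction_on with
  | _ n ih =>
    match n with
    | 0 => simp [treesOf, BinTree.hookProd]
    | (m+1) =>
      rw [treesOf]
      rw [Finset.sum_biUnion]
      · have key : ∀ i ∈ (Finset.range (m+1)).attach,
            (∑ T ∈ ((treesOf i.1) ×ˢ (treesOf (m - i.1))).image
              (fun p => BinTree.node p.1 p.2), (1 : ℚ) / T.hookProd)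
            = 1 / (m+1 : ℚ) := by
          intro i _
          have hi : i.1 < m + 1 := Finset.mem_range.mp i.2
          rw [Finset.sum_image (by rintro ⟨a,b⟩ _ ⟨c,d⟩ _ h; simpa using h)]
          rw [Finset.sum_product]
          have : ∀ l ∈ treesOf i.1, ∀ t ∈ treesOf (m - i.1),
              (1 : ℚ) / (BinTree.node l t).hookProd
              = (1 / (m+1 : ℚ)) * ((1 : ℚ)/l.hookProd * ((1:ℚ)/t.hookProd)) := by
            intro l hl t ht
            have h1 := (mem_treesOf l _).mp hl
            have h2 := (mem_treesOf t _).mp ht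
            have hsz : l.size + t.size + 1 = m + 1 := by omega
            simp only [BinTree.hookProd, hsz, one_div, Nat.cast_mul, mul_inv]
            push_cast
            ring
          calc ∑ l ∈ treesOf i.1, ∑ t ∈ treesOf (m - i.1),
                (1 : ℚ) / (BinTree.node l t).hookProd
              = ∑ l ∈ treesOf i.1, ∑ t ∈ treesOf (m - i.1),
                (1 / (m+1 : ℚ)) * ((1 : ℚ)/l.hookProd * ((1:ℚ)/t.hookProd)) := by
                apply Finset.sum_congr rfl; intro l hl
                apply Finset.sum_congr rfl; intro t ht
                exact this l hl t ht
            _ = (1 / (m+1 : ℚ)) * ((∑ l ∈ treesOf i.1, (1:ℚ)/l.hookProd) *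
                  (∑ t ∈ treesOf (m - i.1), (1:ℚ)/t.hookProd)) := by
                rw [Finset.sum_mul_sum, Finset.mul_sum]
                apply Finset.sum_congr rfl; intro l _
                rw [Finset.mul_sum]
            _ = 1 / (m+1 : ℚ) := by
                rw [ih i.1 hi, ih (m - i.1) (by omega)]; ring
        rw [Finset.sum_congr rfl key, Finset.sum_const, Finset.card_attach,
          Finset.card_range]
        rw [nsmul_eq_mul, Nat.cast_succ]
        field_simp
      · intro i _ j _ hij
        apply Finset.disjoint_left.mpr
        rintro T hTi hTj
        simp only [Finset.mem_image, Finset.mem_product, Finset.mem_coe] at hTi hTj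
        obtain ⟨⟨a,b⟩, ⟨ha, hb⟩, rfl⟩ := hTi
        obtain ⟨⟨c,d⟩, ⟨hc, hd⟩, heq⟩ := hTj
        cases heq
        have h1 := (mem_treesOf a _).mp ha
        have h2 := (mem_treesOf a _).mp hc
        exact hij (Subtype.ext (h1 ▸ h2))

/-- **Hook summation formula for binary trees.** The sum over all rooted binary
trees `T` with `r` vertices of `∏_{v ∈ T} 1/h_T(v)` equals `1`, where `h_T(v)`
is the size of the subtree rooted at `v`.  (Here `S` is the finite set of all
binary trees with `r` vertices.) -/
theorem binary_tree_hook_sum (r : ℕ) (hr : 1 ≤ r) (S : Finset BinTree)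
    (hS : ∀ T : BinTree, T ∈ S ↔ T.size = r) :
    ∑ T ∈ S, (1 : ℚ) / T.hookProd = 1 := by
  have : S = treesOf r := by
    ext T; rw [hS, mem_treesOf]
  rw [this, sum_treesOf]
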